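/- For every X ∈ m the bracket [f₄X, f₄²X] lies in h; equivalently, its projection onto m along h vanishes: [f₄X, f₄²X]_m = 0. -/

import Mathlib

namespace SO4

/-- The matrix `E_{pq}` with `1` in position `(p,q)` and `0` elsewhere (indices `0,…,3`
correspond to the paper's `1,…,4`). -/
def E (p q : Fin 4) : Matrix (Fin 4) (Fin 4) ℝ := Matrix.single p q 1

/-- The element of `m` with coordinates `(a, b₁, b₂, c₁, c₂)`. -/
noncomputable def M (a b1 b2 c1 c2 : ℝ) : Matrix (Fin 4) (Fin 4) ℝ :=
  a • (E 0 1 - E 1 0) + b1 • (E 0 2 - E 2 0) + b2 • (E 0 3 - E 3 0) +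
    c1 • (E 1 2 - E 2 1) + c2 • (E 1 3 - E 3 1)

/-- `h = span{E₃₄ − E₄₃}`, the embedded `so(2)`. -/
def hsub : Submodule ℝ (Matrix (Fin 4) (Fin 4) ℝ) := Submodule.span ℝ {E 2 3 - E 3 2}

/-- `m₁ = span{E₁₂ − E₂₁}`. -/
def m1 : Submodule ℝ (Matrix (Fin 4) (Fin 4) ℝ) := Submodule.span ℝ {E 0 1 - E 1 0}

/-- `m₂ = span{E₁₃ − E₃₁, E₁₄ − E₄₁}`. -/
def m2 : Submodule ℝ (Matrix (Fin 4) (Fin 4) ℝ) :=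
  Submodule.span ℝ {E 0 2 - E 2 0, E 0 3 - E 3 0}

/-- `m₃ = span{E₂₃ − E₃₂, E₂₄ − E₄₂}`. -/
def m3 : Submodule ℝ (Matrix (Fin 4) (Fin 4) ℝ) :=
  Submodule.span ℝ {E 1 2 - E 2 1, E 1 3 - E 3 1}

/-- `m = m₁ ⊕ m₂ ⊕ m₃`. -/
def msum : Submodule ℝ (Matrix (Fin 4) (Fin 4) ℝ) := m1 ⊔ m2 ⊔ m3

/-- The projection of `X ∈ so(4)` onto `m` along `h` (read off the coordinates
`a = X₁₂, b₁ = X₁₃, b₂ = X₁₄, c₁ = X₂₃, c₂ = X₂₄`). -/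
noncomputable def projm (X : Matrix (Fin 4) (Fin 4) ℝ) : Matrix (Fin 4) (Fin 4) ℝ :=
  M (X 0 1) (X 0 2) (X 0 3) (X 1 2) (X 1 3)

/-- The `m₁`-component of `X ∈ m`. -/
noncomputable def P1 (X : Matrix (Fin 4) (Fin 4) ℝ) : Matrix (Fin 4) (Fin 4) ℝ :=
  M (X 0 1) 0 0 0 0

/-- The `m₂`-component of `X ∈ m`. -/
noncomputable def P2 (X : Matrix (Fin 4) (Fin 4) ℝ) : Matrix (Fin 4) (Fin 4) ℝ :=
  M 0 (X 0 2) (X 0 3) 0 0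

/-- The `m₃`-component of `X ∈ m`. -/
noncomputable def P3 (X : Matrix (Fin 4) (Fin 4) ℝ) : Matrix (Fin 4) (Fin 4) ℝ :=
  M 0 0 0 (X 1 2) (X 1 3)

/-- `f₁(a,b₁,b₂,c₁,c₂) = (0, b₂, −b₁, 0, 0)`, acting on `m`. -/
noncomputable def f1 (X : Matrix (Fin 4) (Fin 4) ℝ) : Matrix (Fin 4) (Fin 4) ℝ :=
  M 0 (X 0 3) (-(X 0 2)) 0 0

/-- `f₂(a,b₁,b₂,c₁,c₂) = (0, 0, 0, c₂, −c₁)`, acting on `m`. -/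
noncomputable def f2 (X : Matrix (Fin 4) (Fin 4) ℝ) : Matrix (Fin 4) (Fin 4) ℝ :=
  M 0 0 0 (X 1 3) (-(X 1 2))

/-- `f₃(a,b₁,b₂,c₁,c₂) = (0, b₂, −b₁, c₂, −c₁)`, acting on `m`. -/
noncomputable def f3 (X : Matrix (Fin 4) (Fin 4) ℝ) : Matrix (Fin 4) (Fin 4) ℝ :=
  M 0 (X 0 3) (-(X 0 2)) (X 1 3) (-(X 1 2))

/-- `f₄(a,b₁,b₂,c₁,c₂) = (0, b₂, −b₁, −c₂, c₁)`, acting on `m`. -/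
noncomputable def f4 (X : Matrix (Fin 4) (Fin 4) ℝ) : Matrix (Fin 4) (Fin 4) ℝ :=
  M 0 (X 0 3) (-(X 0 2)) (-(X 1 3)) (X 1 2)

end SO4


namespace SO4

lemma M_eq (a b1 b2 c1 c2 : ℝ) :
    M a b1 b2 c1 c2 = !![0, a, b1, b2; -a, 0, c1, c2; -b1, -c1, 0, 0; -b2, -c2, 0, 0] := by
  ext i j
  fin_cases i <;> fin_cases j <;>
    simp [M, E, Matrix.single, Matrix.vecHead, Matrix.vecTail]

lemma M02 (a b1 b2 c1 c2 : ℝ) : M a b1 b2 c1 c2 0 2 = b1 := by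
  rw [M_eq]; norm_num; rfl
lemma M03 (a b1 b2 c1 c2 : ℝ) : M a b1 b2 c1 c2 0 3 = b2 := by
  rw [M_eq]; norm_num; rfl
lemma M12 (a b1 b2 c1 c2 : ℝ) : M a b1 b2 c1 c2 1 2 = c1 := by
  rw [M_eq]; norm_num [Matrix.vecHead, Matrix.vecTail]; rfl
lemma M13 (a b1 b2 c1 c2 : ℝ) : M a b1 b2 c1 c2 1 3 = c2 := by
  rw [M_eq]; norm_num [Matrix.vecHead, Matrix.vecTail]; rfl

lemma f4_M (a b1 b2 c1 c2 : ℝ) :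
    f4 (M a b1 b2 c1 c2) = M 0 b2 (-b1) (-c2) c1 := by
  unfold f4
  rw [M02, M03, M12, M13]

set_option maxHeartbeats 2000000 in
lemma key (b1 b2 c1 c2 : ℝ) :
    ⁅M 0 b2 (-b1) (-c2) c1, M 0 (-b1) (-b2) (-c1) (-c2)⁆ =
      (b1^2 + b2^2 - c1^2 - c2^2) • (E 2 3 - E 3 2) := by
  rw [M_eq, M_eq, Ring.lie_def]
  ext i j
  fin_cases i <;> fin_cases j <;>
    simp [Matrix.mul_apply, Fin.sum_univ_four, E, Matrix.single,
      Matrix.vecHead, Matrix.vecTail] <;>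
    ring

end SO4

open SO4 in
/-- for every `X ∈ m` the bracket `[f₄X, f₄²X]` lies in `h`; equivalently,
its projection onto `m` along `h` vanishes: `[f₄X, f₄²X]_m = 0`. -/
theorem statement10 :
    ∀ X ∈ msum, ⁅f4 X, f4 (f4 X)⁆ ∈ hsub ∧ projm ⁅f4 X, f4 (f4 X)⁆ = 0 := by
  intro X _
  have hX : f4 X = M 0 (X 0 3) (-(X 0 2)) (-(X 1 3)) (X 1 2) := rfl
  rw [hX, f4_M]
  have h2 : (-(-(X 0 2))) = X 0 2 := by ring
  rw [key]
  constructor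
  · exact Submodule.smul_mem _ _ (Submodule.subset_span rfl)
  · ext i j
    fin_cases i <;> fin_cases j <;>
      simp [projm, M, E, Matrix.single, Matrix.smul_apply, Matrix.sub_apply,
        Matrix.add_apply]
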